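/- Let V = [-π, π], C = {0, 1}, and T(v, c) = v(2c − 1). Suppose Dec and N_v are defined so that N_v(f(v,c)) = T(v,c) and the autoencoder constraint holds on the range of the injective map f. Then the data disentangling property fails: Dec(N_v(f(v,0)), c-feature of type 1) = f(−v, 1) ≠ f(v, 1) for all v ≠ 0, i.e., transferring the varying factor v from a type-0 car to a type-1 car yields the mirrored viewpoint −v instead of v. -/
import Mathlib

open Real

theorem stmt_11 {X : Type*}
    (f : ℝ × Fin 2 → X) (hf : Function.Injective f)
    (N_v : X → ℝ) (N_c : X → Fin 2) (Dec : ℝ × Fin 2 → X)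
    (hNv : ∀ (v : ℝ) (c : Fin 2), N_v (f (v, c)) = v * (2 * (c : ℝ) - 1))
    (hNc : ∀ (v : ℝ) (c : Fin 2), N_c (f (v, c)) = c)
    (hae : ∀ (v : ℝ) (c : Fin 2), v ∈ Set.Icc (-π) π →
      Dec (N_v (f (v, c)), N_c (f (v, c))) = f (v, c)) :
    ∀ v : ℝ, v ∈ Set.Icc (-π) π → v ≠ 0 →
      Dec (N_v (f (v, 0)), (1 : Fin 2)) = f (-v, 1) ∧ f (-v, 1) ≠ f (v, 1) := by
  intro v hv hv0
  have hmem : -v ∈ Set.Icc (-π) π := ⟨by linarith [hv.2], by linarith [hv.1]⟩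
  have h := hae (-v) 1 hmem
  rw [hNv, hNc] at h
  constructor
  · rw [hNv]
    norm_num at h ⊢
    exact h
  · intro heq
    exact hv0 (by have := (Prod.mk.injEq _ _ _ _).mp (hf heq); linarith [this.1])
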